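/- Let A be a finite-dimensional commutative associative unital algebra over ℝ, equipped with a complete algebra norm, which admits a multiplicative unital nil basis: a basis {1, ε_1, …, ε_{n−1}} in which every basis element other than 1 is nilpotent, and such that the product of any two basis elements is a real scalar multiple of a basis element. Then the exponential function exp : A → A is injective. -/

import Mathlib

open NormedSpace

lemma exp_nilpotent_eq (A : Type*) [NormedCommRing A] [NormedAlgebra ℝ A] [CompleteSpace A]
    {u : A} (hu : IsNilpotent u) : ∃ v : A, exp u = 1 + u * v ∧ IsUnit v := by
  obtain ⟨m, hm⟩ := hu
  have hM : u ^ (m + 2) = 0 := pow_eq_zero_of_le (by omega) hm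
  have hexp : exp u = ∑ k ∈ Finset.range (m + 2), (Nat.factorial k : ℝ)⁻¹ • u ^ k := by
    rw [exp_eq_tsum ℝ]
    exact tsum_eq_sum fun k hk => by
      rw [pow_eq_zero_of_le (by simpa [Finset.mem_range] using hk) hM, smul_zero]
  set v : A := ∑ k ∈ Finset.range (m + 1), (Nat.factorial (k + 1) : ℝ)⁻¹ • u ^ k with hv
  refine ⟨v, ?_, ?_⟩
  · rw [hexp, Finset.sum_range_succ' _ (m + 1)]
    have h0 : (Nat.factorial 0 : ℝ)⁻¹ • u ^ 0 = 1 := by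
      simp [Nat.factorial]
    rw [h0, add_comm, hv, Finset.mul_sum]
    congr 1
    refine Finset.sum_congr rfl fun k _ => ?_
    rw [mul_smul_comm, pow_succ']
  · have hv1 : v = (∑ k ∈ Finset.range m, (Nat.factorial (k + 1 + 1) : ℝ)⁻¹ • u ^ (k + 1)) + 1 := by
      rw [hv, Finset.sum_range_succ' _ m]
      congr 1
      simp [Nat.factorial]
    rw [hv1, add_comm]
    refine IsNilpotent.isUnit_one_add (isNilpotent_sum fun k _ => ?_)
    exact IsNilpotent.smul ⟨m, by rw [← pow_mul]; exact pow_eq_zero_of_le (by nlinarith) hm⟩ _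

theorem stmt11 (A : Type*) [NormedCommRing A] [NormedAlgebra ℝ A] [CompleteSpace A]
    [FiniteDimensional ℝ A]
    (n : ℕ) (β : Module.Basis (Fin (n + 1)) ℝ A) (hone : β 0 = 1)
    (hnil : ∀ i : Fin (n + 1), i ≠ 0 → IsNilpotent (β i))
    (hmul : ∀ i j, ∃ (c : ℝ) (k : Fin (n + 1)), β i * β j = c • β k) :
    Function.Injective (exp : A → A) := by
  let +nondep : NormedAlgebra ℚ A := .restrictScalars ℚ ℝ A
  have hone' : (1 : A) ≠ 0 := hone ▸ β.ne_zero 0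
  -- scalar multiples of 1 that are nilpotent are zero
  have hscal : ∀ c : ℝ, IsNilpotent (c • (1 : A)) → c = 0 := by
    intro c ⟨k, hk⟩
    rw [smul_pow, one_pow] at hk
    rcases smul_eq_zero.mp hk with h | h
    · by_contra hc
      exact pow_ne_zero k hc h
    · exact absurd h hone'
  intro x y hxy
  set z := x - y with hz
  have hz1 : exp z = 1 := by
    rw [hz, sub_eq_add_neg, exp_add, hxy, ← exp_add, add_neg_cancel, exp_zero]
  -- decompose z = a • 1 + u with u nilpotent
  set a : ℝ := β.repr z 0 with ha
  set u : A := ∑ i ∈ Finset.univ.erase 0, β.repr z i • β i with hu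
  have hdecomp : z = a • (1 : A) + u := by
    rw [hu, ← hone]
    conv_lhs => rw [← β.sum_repr z]
    rw [← Finset.add_sum_erase _ _ (Finset.mem_univ 0)]
  have hunil : IsNilpotent u :=
    isNilpotent_sum fun i hi => IsNilpotent.smul (hnil i (Finset.ne_of_mem_erase hi)) _
  obtain ⟨v, hev, hvu⟩ := exp_nilpotent_eq A hunil
  have hea : exp (a • (1 : A)) = Real.exp a • 1 := by
    rw [← Algebra.algebraMap_eq_smul_one, ← algebraMap_exp_comm, Real.exp_eq_exp_ℝ,
      Algebra.algebraMap_eq_smul_one]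
  have key : (1 : A) = Real.exp a • 1 + Real.exp a • (u * v) := by
    calc (1 : A) = exp z := hz1.symm
    _ = exp (a • (1 : A)) * exp u := by rw [hdecomp, exp_add]
    _ = (Real.exp a • 1) * (1 + u * v) := by rw [hea, hev]
    _ = Real.exp a • 1 + Real.exp a • (u * v) := by
        rw [smul_mul_assoc, one_mul, smul_add]
  have huvnil : IsNilpotent (u * v) := Commute.isNilpotent_mul_right (Commute.all _ _) hunil
  have h1 : (1 - Real.exp a) • (1 : A) = Real.exp a • (u * v) := by
    rw [sub_smul, one_smul, sub_eq_iff_eq_add]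
    nth_rewrite 1 [key]
    exact add_comm _ _
  have ha0 : Real.exp a = 1 := by
    have := hscal (1 - Real.exp a) (h1 ▸ IsNilpotent.smul huvnil _)
    linarith
  have huv0 : u * v = 0 := by
    rw [ha0, one_smul, one_smul] at key
    exact (left_eq_add.mp key)
  have hu0 : u = 0 := (hvu.mul_left_eq_zero).mp huv0
  have haz : a = 0 := Real.exp_injective (by rw [ha0, Real.exp_zero])
  have hz0 : z = 0 := by rw [hdecomp, hu0, haz, zero_smul, add_zero]
  exact sub_eq_zero.mp hz0
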